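/- arXiv:cs/0612051 — 2 statements merged into one kernel-verified Lean document; each statement's English description precedes it below -/
import Mathlib

section
/- Let C ⊆ GF(q^m)^n be an MRD code (possibly nonlinear) with n ≤ m, |C| = q^{mk}, and minimum rank distance n - k + 1. For any elementary linear subspace V of dimension v with k ≤ v ≤ n, the restriction C_V = { r_V(c) : c ∈ C } ⊆ GF(q^m)^v is an MRD code of length v, cardinality q^{mk}, and minimum rank distance v - k + 1. -/
noncomputable def Aq (q m u : ℕ) : ℝ := ∏ i ∈ Finset.range u, ((q:ℝ)^m - (q:ℝ)^i)

noncomputable def Kq (q : ℕ) : ℝ := ∏' j : ℕ, (1 - ((q:ℝ))⁻¹ ^ (j+1))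

noncomputable def gaussBinom (q n t : ℕ) : ℝ := Aq q n t / Aq q t t

noncomputable def rk (Fq : Type*) {F : Type*} [Field Fq] [Field F] [Algebra Fq F] {n : ℕ} (x : Fin n → F) : ℕ :=
  Module.finrank Fq (Submodule.span Fq (Set.range x))

def IsElementary (Fq : Type*) {F : Type*} [Field Fq] [Field F] [Algebra Fq F] {n : ℕ} (V : Submodule F (Fin n → F)) : Prop :=
  ∃ b : Module.Basis (Fin (Module.finrank F V)) F V,
    ∀ i j, ((b i : Fin n → F) j) ∈ Set.range (algebraMap Fq F)

section aux
variable {Fq F : Type*} [Field Fq] [Field F] [Algebra Fq F] {n : ℕ}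

lemma rk_le_of_forall_mem (x : Fin n → F) (W : Submodule Fq F) [FiniteDimensional Fq W]
    (h : ∀ j, x j ∈ W) : rk Fq x ≤ Module.finrank Fq W :=
  Submodule.finrank_mono (Submodule.span_le.mpr (Set.range_subset_iff.mpr h))

lemma rk_zero : rk Fq (0 : Fin n → F) = 0 := by
  have h : Submodule.span Fq (Set.range (0 : Fin n → F)) = ⊥ := by
    rw [Submodule.span_eq_bot]
    rintro x ⟨j, rfl⟩; rfl
  rw [rk, h, finrank_bot]

/-- if each coordinate of `x` lies in span(range a) ⊔ span(range b) then rk x ≤ rk a + rk b -/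
lemma rk_le_add {p : ℕ} (x : Fin n → F) (a : Fin p → F) (b : Fin n → F)
    (h : ∀ j, x j ∈ Submodule.span Fq (Set.range a) ⊔ Submodule.span Fq (Set.range b)) :
    rk Fq x ≤ rk Fq a + rk Fq b := by
  have ha : FiniteDimensional Fq (Submodule.span Fq (Set.range a)) :=
    FiniteDimensional.span_of_finite Fq (Set.finite_range a)
  have hb : FiniteDimensional Fq (Submodule.span Fq (Set.range b)) :=
    FiniteDimensional.span_of_finite Fq (Set.finite_range b)
  have hsup : FiniteDimensional Fq
      ((Submodule.span Fq (Set.range a)) ⊔ (Submodule.span Fq (Set.range b)) : Submodule Fq F) :=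
    Submodule.finiteDimensional_sup _ _
  refine le_trans (rk_le_of_forall_mem x _ h) ?_
  have := Submodule.finrank_sup_add_finrank_inf_eq (Submodule.span Fq (Set.range a))
    (Submodule.span Fq (Set.range b))
  unfold rk
  omega

/-- rank of an element of an elementary subspace is at most its dimension -/
lemma rk_le_of_mem_elementary {W : Submodule F (Fin n → F)} (hW : IsElementary Fq W)
    {x : Fin n → F} (hx : x ∈ W) : rk Fq x ≤ Module.finrank F W := by
  obtain ⟨b, hb⟩ := hW
  let f : Fin (Module.finrank F W) → F := fun i => b.repr ⟨x, hx⟩ i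
  have hx2 : ∀ j, x j ∈ Submodule.span Fq (Set.range f) := by
    intro j
    have hxr : (⟨x, hx⟩ : W) = ∑ i, f i • b i := (b.sum_repr ⟨x, hx⟩).symm
    have hxr' : x = ∑ i, f i • (b i : Fin n → F) := by
      have := congrArg (Subtype.val) hxr
      simpa using this
    have : x j = ∑ i, f i * (b i : Fin n → F) j := by
      rw [hxr']; simp [Finset.sum_apply]
    rw [this]
    refine Submodule.sum_mem _ fun i _ => ?_
    obtain ⟨a, hA⟩ := hb i j
    rw [← hA, mul_comm, ← Algebra.smul_def]
    exact Submodule.smul_mem _ _ (Submodule.subset_span ⟨i, rfl⟩)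
  have hfin : FiniteDimensional Fq (Submodule.span Fq (Set.range f)) :=
    FiniteDimensional.span_of_finite Fq (Set.finite_range f)
  refine le_trans (rk_le_of_forall_mem x _ hx2) ?_
  simpa [Set.finrank] using (finrank_range_le_card (R := Fq) f)
end aux


/-- The restriction of an MRD code to an elementary linear subspace `V` of dimension `v`
(`k ≤ v ≤ n`), via `r_V(x) = x_V · B^{-R}`, is an MRD code of length `v`, cardinality
`q^{mk}` and minimum rank distance `v - k + 1`. -/
theorem stmt15 (q m n k v : ℕ) (Fq F : Type) [Field Fq] [Fintype Fq] [Field F] [Algebra Fq F]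
    (hq : Fintype.card Fq = q) (hm : Module.finrank Fq F = m)
    (hk : 1 ≤ k) (hkv : k ≤ v) (hvn : v ≤ n) (hnm : n ≤ m)
    (C : Set (Fin n → F)) (hcard : Nat.card C = q ^ (m * k))
    (hMRD : ∀ c ∈ C, ∀ c' ∈ C, c ≠ c' → n - k + 1 ≤ rk Fq (c - c'))
    (B : Matrix (Fin v) (Fin n) Fq) (Br : Matrix (Fin n) (Fin v) Fq) (hBr : B * Br = 1)
    (V V' : Submodule F (Fin n → F))
    (hVdef : V = Submodule.span F (Set.range fun i => fun j => algebraMap Fq F (B i j)))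
    (hV' : IsElementary Fq V') (hcompl : IsCompl V V')
    (CV : Set (Fin v → F))
    (hCV : CV = (fun c => Matrix.vecMul
        ((Submodule.linearProjOfIsCompl V V' hcompl c : Fin n → F))
        (Br.map (algebraMap Fq F))) '' C) :
    Nat.card CV = q ^ (m * k) ∧
    ∀ x ∈ CV, ∀ y ∈ CV, x ≠ y → v - k + 1 ≤ rk Fq (x - y) := by
  classical
  set φ := algebraMap Fq F with hφ
  set BF := B.map φ with hBF
  set BrF := Br.map φ with hBrF
  set r : (Fin n → F) → (Fin v → F) := fun c => Matrix.vecMul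
      ((Submodule.linearProjOfIsCompl V V' hcompl c : Fin n → F)) BrF with hr
  have hone : BF * BrF = 1 := by
    rw [hBF, hBrF, ← Matrix.map_mul, hBr, Matrix.map_one φ (map_zero φ) (map_one φ)]
  -- every element of V is `vecMul y BF`
  have hVmem : ∀ x ∈ V, x = Matrix.vecMul (Matrix.vecMul x BrF) BF := by
    intro x hx
    rw [hVdef] at hx
    have : x ∈ LinearMap.range BF.vecMulLinear := by
      rw [range_vecMulLinear]
      exact hx
    obtain ⟨y, hy⟩ := this
    have hy' : x = Matrix.vecMul y BF := hy.symm
    have h2 : Matrix.vecMul x BrF = y := by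
      rw [hy', Matrix.vecMul_vecMul, hone, Matrix.vecMul_one]
    rw [h2, ← hy']
  -- dimension of V'
  have hfinV' : Module.finrank F V' = n - v := by
    have hli : LinearIndependent F (fun i => fun j => φ (B i j)) := by
      rw [Fintype.linearIndependent_iff]
      intro g hg
      have hg' : Matrix.vecMul g BF = 0 := by
        ext j
        have := congrFun hg j
        simpa [Matrix.vecMul, dotProduct, Finset.sum_apply, BF, Matrix.map_apply] using this
      intro i
      have : Matrix.vecMul (Matrix.vecMul g BF) BrF = Matrix.vecMul (0 : Fin n → F) BrF := by
        rw [hg']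
      rw [Matrix.vecMul_vecMul, hone, Matrix.vecMul_one, Matrix.zero_vecMul] at this
      exact congrFun this i
    have hV : Module.finrank F V = v := by
      rw [hVdef, finrank_span_eq_card hli, Fintype.card_fin]
    have := Submodule.finrank_add_eq_of_isCompl hcompl
    rw [hV, Module.finrank_fin_fun] at this
    omega
  -- the key rank bound
  have key : ∀ c ∈ C, ∀ c' ∈ C, c ≠ c' → v - k + 1 ≤ rk Fq (r c - r c') := by
    intro c hc c' hc' hne
    set d := c - c' with hd2
    have hd : n - k + 1 ≤ rk Fq d := hMRD c hc c' hc' hne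
    set π := Submodule.linearProjOfIsCompl V V' hcompl with hπ
    set πd : Fin n → F := (π d : Fin n → F) with hπd
    set y : Fin v → F := Matrix.vecMul πd BrF with hy
    have hrc : r c - r c' = y := by
      rw [hr, hy]
      simp only
      rw [← Matrix.sub_vecMul, hπd, hπ, hd2, map_sub]
      rfl
    -- πd ∈ V, and πd = vecMul y BF
    have hπdV : πd = Matrix.vecMul y BF := by
      rw [hy]; exact hVmem πd (π d).2
    -- w := d - πd ∈ V'
    set w : Fin n → F := d - πd with hw
    have hwV' : w ∈ V' := by
      have h3 := Submodule.projection_add_projection_eq_self hcompl d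
      have hwe : w = (Submodule.linearProjOfIsCompl V' V hcompl.symm d : Fin n → F) := by
        rw [hw, hπd, hπ]
        exact (eq_sub_of_add_eq' h3).symm
      rw [hwe]
      exact (Submodule.linearProjOfIsCompl V' V hcompl.symm d).2
    have hwrk : rk Fq w ≤ n - v := by
      have := rk_le_of_mem_elementary (Fq := Fq) hV' hwV'
      rwa [hfinV'] at this
    -- rk d ≤ rk y + rk w
    have hsub : rk Fq d ≤ rk Fq y + rk Fq w := by
      refine rk_le_add d y w fun j => ?_
      have hdj : d j = ∑ i, y i * φ (B i j) + w j := by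
        have : d = Matrix.vecMul y BF + w := by rw [hw, ← hπdV]; ring
        rw [this]
        simp [Matrix.vecMul, dotProduct, BF, Matrix.map_apply]
      rw [hdj]
      refine Submodule.add_mem _ ?_ (Submodule.mem_sup_right (Submodule.subset_span ⟨j, rfl⟩))
      refine Submodule.sum_mem _ fun i _ => ?_
      rw [mul_comm, ← Algebra.smul_def]
      exact Submodule.mem_sup_left (Submodule.smul_mem _ _ (Submodule.subset_span ⟨i, rfl⟩))
    rw [hrc]
    omega
  -- injectivity on C
  have hinj : Set.InjOn r C := by
    intro c hc c' hc' heq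
    by_contra hne
    have h1 := key c hc c' hc' hne
    rw [heq, sub_self, rk_zero] at h1
    omega
  constructor
  · rw [hCV, Nat.card_image_of_injOn hinj, hcard]
  · intro x hx y hy hxy
    rw [hCV] at hx hy
    obtain ⟨c, hc, rfl⟩ := hx
    obtain ⟨c', hc', rfl⟩ := hy
    have hne : c ≠ c' := fun h => hxy (by rw [h])
    exact key c hc c' hc' hne
end

section
/- Suppose y ∈ GF(q^m)^v has rank w. Then the number of vectors z ∈ GF(q^m)^u such that the concatenation (y, z) ∈ GF(q^m)^{u+v} has rank s equals [u choose s-w]_q · A(m-w, s-w) · q^{wu}. -/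
/-! ### Auxiliary real-product identities -/

lemma Aq_zero (q n : ℕ) : Aq q n 0 = 1 := by simp [Aq]

lemma Aq_succ (q n t : ℕ) : Aq q n (t+1) = Aq q n t * ((q:ℝ)^n - (q:ℝ)^t) := by
  simp [Aq, Finset.prod_range_succ]

lemma Aq_shift (q u t : ℕ) :
    Aq q (u+1) (t+1) = ((q:ℝ)^(u+1) - 1) * (q:ℝ)^t * Aq q u t := by
  rw [Aq, Finset.prod_range_succ']
  have h : ∀ i ∈ Finset.range t,
      ((q:ℝ)^(u+1) - (q:ℝ)^(i+1)) = (q:ℝ) * ((q:ℝ)^u - (q:ℝ)^i) := by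
    intro i _; ring
  rw [Finset.prod_congr rfl h, Finset.prod_mul_distrib, Finset.prod_const, Aq,
    Finset.card_range]
  ring

lemma Aq_pos {q : ℕ} (hq : 2 ≤ q) {n t : ℕ} (h : t ≤ n) : 0 < Aq q n t := by
  apply Finset.prod_pos
  intro i hi
  have hi' : i < n := lt_of_lt_of_le (Finset.mem_range.mp hi) h
  have h1q : (1:ℝ) < (q:ℝ) := by exact_mod_cast hq
  have := pow_lt_pow_right₀ h1q hi'
  linarith

lemma gaussBinom_zero (q u : ℕ) : gaussBinom q u 0 = 1 := by
  simp [gaussBinom, Aq_zero]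

lemma gaussBinom_top_zero (q r : ℕ) : gaussBinom q 0 (r+1) = 0 := by
  have : Aq q 0 (r+1) = 0 := by
    apply Finset.prod_eq_zero (Finset.mem_range.mpr (Nat.succ_pos r))
    simp
  simp [gaussBinom, this]

lemma gauss_pascal {q : ℕ} (hq : 2 ≤ q) (u t : ℕ) :
    gaussBinom q (u+1) (t+1) = (q:ℝ)^(t+1) * gaussBinom q u (t+1) + gaussBinom q u t := by
  have hAtt : Aq q t t ≠ 0 := (Aq_pos hq le_rfl).ne'
  have hq0 : (0:ℝ) < (q:ℝ) := by positivity
  have hqt : (q:ℝ)^t ≠ 0 := by positivity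
  have hq1 : (q:ℝ)^(u+1) - 1 ≠ 0 ∨ True := Or.inr trivial
  have hq1' : (q:ℝ)^(t+1) - 1 ≠ 0 := by
    have h1q : (1:ℝ) < (q:ℝ) := by exact_mod_cast hq
    have : (1:ℝ) < (q:ℝ)^(t+1) := one_lt_pow₀ h1q (Nat.succ_ne_zero t)
    linarith
  rw [gaussBinom, gaussBinom, gaussBinom, Aq_shift q u t, Aq_shift q t t,
    Aq_succ q u t]
  field_simp
  ring

/-! ### Counting tuples of given rank -/

section Counting

attribute [local instance] Fintype.ofFinite

variable {Fq V : Type*} [Field Fq] [Fintype Fq] [AddCommGroup V] [Module Fq V]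

lemma rank_cons_mem {u : ℕ} {z' : Fin u → V} {a : V}
    (ha : a ∈ Submodule.span Fq (Set.range z')) :
    Module.finrank Fq (Submodule.span Fq (Set.range (Fin.cons a z'))) =
      Module.finrank Fq (Submodule.span Fq (Set.range z')) := by
  rw [Fin.range_cons, Submodule.span_insert_eq_span ha]

lemma rank_cons_notmem [FiniteDimensional Fq V] {u : ℕ} {z' : Fin u → V} {a : V}
    (ha : a ∉ Submodule.span Fq (Set.range z')) :
    Module.finrank Fq (Submodule.span Fq (Set.range (Fin.cons a z'))) =
      Module.finrank Fq (Submodule.span Fq (Set.range z')) + 1 := by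
  have ha0 : a ≠ 0 := fun h => ha (h ▸ Submodule.zero_mem _)
  rw [Fin.range_cons, Submodule.span_insert]
  have hinf : Submodule.span Fq {a} ⊓ Submodule.span Fq (Set.range z') = ⊥ := by
    rw [eq_bot_iff]
    rintro x ⟨hx1, hx2⟩
    obtain ⟨c, rfl⟩ := Submodule.mem_span_singleton.mp hx1
    rcases eq_or_ne c 0 with rfl | hc
    · simp
    · exact absurd (by
        have : c⁻¹ • (c • a) ∈ Submodule.span Fq (Set.range z') :=
          Submodule.smul_mem _ _ hx2
        rwa [smul_smul, inv_mul_cancel₀ hc, one_smul] at this) ha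
  have := Submodule.finrank_sup_add_finrank_inf_eq (Submodule.span Fq {a})
    (Submodule.span Fq (Set.range z'))
  rw [hinf, finrank_span_singleton ha0, finrank_bot Fq V, add_zero] at this
  omega

/-- Equivalence splitting off the first coordinate of a tuple. -/
def consSigmaEquiv {V : Type*} {u : ℕ} (P : (Fin (u+1) → V) → Prop) :
    {z : Fin (u+1) → V // P z} ≃ Σ z' : Fin u → V, {a : V // P (Fin.cons a z')} where
  toFun z := ⟨Fin.tail z.1, z.1 0, by rw [Fin.cons_self_tail]; exact z.2⟩
  invFun s := ⟨Fin.cons s.2.1 s.1, s.2.2⟩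
  left_inv z := Subtype.ext (Fin.cons_self_tail z.1)
  right_inv s := by
    rcases s with ⟨z', a, h⟩
    have ht : Fin.tail (Fin.cons a z' : Fin (u+1) → V) = z' := by
      funext i; simp
    refine Sigma.ext ht ((Subtype.heq_iff_coe_eq ?_).mpr ?_)
    · intro x
      show P (Fin.cons x (Fin.tail (Fin.cons a z' : Fin (u+1) → V))) ↔ P (Fin.cons x z')
      rw [ht]
    · show (Fin.cons a z' : Fin (u+1) → V) 0 = a
      simp

lemma card_submodule [FiniteDimensional Fq V] (U : Submodule Fq V) :
    Nat.card U = Fintype.card Fq ^ Module.finrank Fq U := by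
  haveI : Finite V := Module.finite_of_finite Fq
  rw [Nat.card_eq_fintype_card]
  exact Module.card_eq_pow_finrank

lemma card_rank_zero [FiniteDimensional Fq V] (u : ℕ) :
    Nat.card {z : Fin u → V // Module.finrank Fq (Submodule.span Fq (Set.range z)) = 0} = 1 := by
  have key : ∀ z : Fin u → V,
      Module.finrank Fq (Submodule.span Fq (Set.range z)) = 0 ↔ z = 0 := by
    intro z
    rw [Submodule.finrank_eq_zero, Submodule.span_eq_bot]
    constructor
    · intro h; funext i; exact h (z i) ⟨i, rfl⟩
    · rintro rfl x ⟨i, rfl⟩; rfl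
  rw [Nat.card_congr (Equiv.subtypeEquivRight key)]
  haveI : Unique {z : Fin u → V // z = 0} :=
    ⟨⟨⟨0, rfl⟩⟩, fun a => Subtype.ext a.2⟩
  exact Nat.card_unique

lemma card_fiber [FiniteDimensional Fq V] {u : ℕ} (z' : Fin u → V) (r : ℕ) :
    (Nat.card {a : V // Module.finrank Fq (Submodule.span Fq (Set.range (Fin.cons a z'))) = r+1} : ℝ)
      = if Module.finrank Fq (Submodule.span Fq (Set.range z')) = r+1
          then (Fintype.card Fq : ℝ)^(r+1)
        else if Module.finrank Fq (Submodule.span Fq (Set.range z')) = r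
          then (Fintype.card Fq : ℝ)^(Module.finrank Fq V) - (Fintype.card Fq : ℝ)^r
        else 0 := by
  classical
  haveI : Finite V := Module.finite_of_finite Fq
  split_ifs with h1 h2
  · -- fiber is the span itself
    have key : ∀ a : V,
        Module.finrank Fq (Submodule.span Fq (Set.range (Fin.cons a z'))) = r+1 ↔
          a ∈ Submodule.span Fq (Set.range z') := by
      intro a
      constructor
      · intro h
        by_contra ha
        rw [rank_cons_notmem ha] at h
        omega
      · intro ha
        rw [rank_cons_mem ha]; exact h1
    rw [Nat.card_congr (Equiv.subtypeEquivRight key)]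
    have hcc : Nat.card {a : V // a ∈ Submodule.span Fq (Set.range z')}
        = Nat.card (Submodule.span Fq (Set.range z')) := rfl
    rw [hcc, card_submodule, h1]
    push_cast; ring
  · -- fiber is the complement of the span
    have key : ∀ a : V,
        Module.finrank Fq (Submodule.span Fq (Set.range (Fin.cons a z'))) = r+1 ↔
          ¬ a ∈ Submodule.span Fq (Set.range z') := by
      intro a
      constructor
      · intro h ha
        rw [rank_cons_mem ha] at h
        exact h1 h
      · intro ha
        rw [rank_cons_notmem ha, h2]
    rw [Nat.card_congr (Equiv.subtypeEquivRight key), Nat.card_eq_fintype_card,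
      Fintype.card_subtype_compl]
    have hVcard : Fintype.card V = Fintype.card Fq ^ Module.finrank Fq V :=
      Module.card_eq_pow_finrank
    have hBcard : Fintype.card {a : V // a ∈ Submodule.span Fq (Set.range z')}
        = Fintype.card Fq ^ r := by
      rw [← Nat.card_eq_fintype_card]
      have hcc : Nat.card {a : V // a ∈ Submodule.span Fq (Set.range z')}
          = Nat.card (Submodule.span Fq (Set.range z')) := rfl
      rw [hcc, card_submodule, h2]
    have hrle : r ≤ Module.finrank Fq V := by
      rw [← h2]; exact Submodule.finrank_le _
    have hle : Fintype.card Fq ^ r ≤ Fintype.card Fq ^ Module.finrank Fq V :=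
      Nat.pow_le_pow_right Fintype.card_pos hrle
    rw [hVcard, hBcard]
    push_cast [Nat.cast_sub hle]
    ring
  · -- fiber empty
    haveI : IsEmpty {a : V //
        Module.finrank Fq (Submodule.span Fq (Set.range (Fin.cons a z'))) = r+1} := by
      constructor
      rintro ⟨a, ha⟩
      by_cases hmem : a ∈ Submodule.span Fq (Set.range z')
      · rw [rank_cons_mem hmem] at ha; exact h1 ha
      · rw [rank_cons_notmem hmem] at ha; omega
    rw [Nat.card_of_isEmpty]
    simp

theorem count_rank [FiniteDimensional Fq V] (u t : ℕ) :
    (Nat.card {z : Fin u → V //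
        Module.finrank Fq (Submodule.span Fq (Set.range z)) = t} : ℝ)
      = gaussBinom (Fintype.card Fq) u t
          * Aq (Fintype.card Fq) (Module.finrank Fq V) t := by
  classical
  haveI : Finite V := Module.finite_of_finite Fq
  have hq2 : 2 ≤ Fintype.card Fq := Fintype.one_lt_card
  induction u generalizing t with
  | zero =>
    rcases t with _ | r
    · rw [card_rank_zero (Fq := Fq) (V := V) 0]
      simp [gaussBinom_zero, Aq_zero]
    · haveI he : IsEmpty {z : Fin 0 → V //
          Module.finrank Fq (Submodule.span Fq (Set.range z)) = r+1} := by
        constructor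
        rintro ⟨z, hz⟩
        rw [Set.range_eq_empty z, Submodule.span_empty, finrank_bot] at hz
        omega
      rw [Nat.card_of_isEmpty, gaussBinom_top_zero]
      simp
  | succ u ih =>
    rcases t with _ | r
    · rw [card_rank_zero (Fq := Fq) (V := V) (u+1)]
      simp [gaussBinom_zero, Aq_zero]
    · rw [Nat.card_congr (consSigmaEquiv
        (fun z : Fin (u+1) → V =>
          Module.finrank Fq (Submodule.span Fq (Set.range z)) = r+1))]
      rw [Nat.card_eq_fintype_card, Fintype.card_sigma]
      push_cast
      have hsum : ∀ z' : Fin u → V,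
          ((Fintype.card {a : V //
            Module.finrank Fq (Submodule.span Fq (Set.range (Fin.cons a z'))) = r+1} : ℕ) : ℝ)
          = (if Module.finrank Fq (Submodule.span Fq (Set.range z')) = r+1
              then (Fintype.card Fq : ℝ)^(r+1) else 0)
            + (if Module.finrank Fq (Submodule.span Fq (Set.range z')) = r
              then (Fintype.card Fq : ℝ)^(Module.finrank Fq V) - (Fintype.card Fq : ℝ)^r
              else 0) := by
        intro z'
        rw [← Nat.card_eq_fintype_card, card_fiber z' r]
        split_ifs <;> first | omega | ring
      rw [Finset.sum_congr rfl (fun z' _ => hsum z')]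
      rw [Finset.sum_add_distrib]
      have hA : ∀ (c : ℝ) (j : ℕ),
          (∑ z' : Fin u → V,
            if Module.finrank Fq (Submodule.span Fq (Set.range z')) = j then c else 0)
          = (Nat.card {z' : Fin u → V //
              Module.finrank Fq (Submodule.span Fq (Set.range z')) = j} : ℝ) * c := by
        intro c j
        rw [← Finset.sum_filter, Finset.sum_const, nsmul_eq_mul]
        congr 1
        rw [Nat.card_eq_fintype_card, Fintype.card_subtype]
      rw [hA _ (r+1), hA _ r, ih (r+1), ih r, gauss_pascal hq2 u r,
        Aq_succ (Fintype.card Fq) (Module.finrank Fq V) r]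
      ring

end Counting

/-! ### rank zero characterization over a possibly infinite-dimensional space -/

lemma rk_eq_zero_iff {Fq F : Type*} [Field Fq] [Field F] [Algebra Fq F] {n : ℕ}
    (x : Fin n → F) : rk Fq x = 0 ↔ ∀ i, x i = 0 := by
  haveI : FiniteDimensional Fq (Submodule.span Fq (Set.range x)) :=
    FiniteDimensional.span_of_finite Fq (Set.finite_range x)
  rw [rk, Submodule.finrank_eq_zero, Submodule.span_eq_bot]
  constructor
  · intro h i; exact h (x i) ⟨i, rfl⟩
  · rintro h _ ⟨i, rfl⟩; exact h i

/-- If `y ∈ GF(q^m)^v` has rank `w`, the number of `z ∈ GF(q^m)^u` such that `(y, z)` has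
rank `s` equals `[u choose s-w]_q · A(m-w, s-w) · q^{wu}`. -/
theorem stmt16 (q m u v w s : ℕ) (Fq F : Type) [Field Fq] [Fintype Fq] [Field F] [Algebra Fq F]
    (hq : Fintype.card Fq = q) (hm : Module.finrank Fq F = m)
    (hws : w ≤ s) (hsu : s ≤ w + u) (hsm : s ≤ m)
    (y : Fin v → F) (hy : rk Fq y = w) :
    (Nat.card {z : Fin u → F // rk Fq (Fin.append y z) = s} : ℝ) =
      gaussBinom q u (s - w) * Aq q (m - w) (s - w) * (q:ℝ) ^ (w * u) := by
  classical
  have hq2 : 2 ≤ q := hq ▸ Fintype.one_lt_card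
  rcases Nat.eq_zero_or_pos m with rfl | hm0
  · -- degenerate case `m = 0`
    have hs0 : s = 0 := Nat.le_zero.mp hsm
    have hw0 : w = 0 := Nat.le_zero.mp (hs0 ▸ hws)
    subst hs0; subst hw0
    have hy0 : ∀ i, y i = 0 := (rk_eq_zero_iff y).mp hy
    have key : ∀ z : Fin u → F, rk Fq (Fin.append y z) = 0 ↔ z = 0 := by
      intro z
      rw [rk_eq_zero_iff]
      constructor
      · intro h; funext i
        have := h (Fin.natAdd v i)
        rwa [Fin.append_right] at this
      · rintro rfl i
        refine Fin.addCases (fun j => ?_) (fun j => ?_) i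
        · rw [Fin.append_left]; exact hy0 j
        · rw [Fin.append_right]; rfl
    rw [Nat.card_congr (Equiv.subtypeEquivRight key)]
    haveI : Unique {z : Fin u → F // z = 0} := ⟨⟨⟨0, rfl⟩⟩, fun a => Subtype.ext a.2⟩
    rw [Nat.card_unique]
    simp [gaussBinom_zero, Aq_zero]
  · haveI : FiniteDimensional Fq F := FiniteDimensional.of_finrank_pos (hm ▸ hm0)
    haveI : Finite F := Module.finite_of_finite Fq
    set W : Submodule Fq F := Submodule.span Fq (Set.range y) with hWdef
    have hW : Module.finrank Fq W = w := hy
    obtain ⟨W', hWc⟩ := Submodule.exists_isCompl W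
    -- rank condition transfer
    have hkey : ∀ z : Fin u → F, rk Fq (Fin.append y z) = s ↔
        Module.finrank Fq (Submodule.span Fq (Set.range (W.mkQ ∘ z))) = s - w := by
      intro z
      have hr : Set.range (Fin.append y z) = Set.range y ∪ Set.range z := by
        ext x
        constructor
        · rintro ⟨i, rfl⟩
          refine Fin.addCases (fun j => ?_) (fun j => ?_) i
          · rw [Fin.append_left]; exact Or.inl ⟨j, rfl⟩
          · rw [Fin.append_right]; exact Or.inr ⟨j, rfl⟩
        · rintro (⟨j, rfl⟩ | ⟨j, rfl⟩)
          · exact ⟨Fin.castAdd u j, Fin.append_left y z j⟩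
          · exact ⟨Fin.natAdd v j, Fin.append_right y z j⟩
      have hspan : Submodule.span Fq (Set.range (Fin.append y z)) =
          W ⊔ Submodule.span Fq (Set.range z) := by
        rw [hr, Submodule.span_union]
      set U : Submodule Fq F := W ⊔ Submodule.span Fq (Set.range z) with hUdef
      have hWU : W ≤ U := le_sup_left
      have hmap : Submodule.span Fq (Set.range (W.mkQ ∘ z)) = Submodule.map W.mkQ U := by
        rw [Set.range_comp, ← Submodule.map_span, hUdef, Submodule.map_sup]
        have hbot : Submodule.map W.mkQ W = ⊥ := by
          rw [eq_bot_iff]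
          rintro x ⟨a, ha, rfl⟩
          simp only [Submodule.mkQ_apply, Submodule.mem_bot]
          exact (Submodule.Quotient.mk_eq_zero W).mpr ha
        rw [hbot, bot_sup_eq]
      have hrank : Module.finrank Fq (Submodule.map W.mkQ U) + w = Module.finrank Fq U := by
        have h1 := LinearMap.finrank_range_add_finrank_ker (W.mkQ.comp U.subtype)
        have h2 : LinearMap.range (W.mkQ.comp U.subtype) = Submodule.map W.mkQ U := by
          rw [LinearMap.range_comp, Submodule.range_subtype]
        have h3 : LinearMap.ker (W.mkQ.comp U.subtype) = Submodule.comap U.subtype W := by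
          rw [LinearMap.ker_comp, Submodule.ker_mkQ]
        have h4 : Module.finrank Fq (Submodule.comap U.subtype W) = w := by
          rw [LinearEquiv.finrank_eq (Submodule.comapSubtypeEquivOfLe hWU)]
          exact hW
        rw [h2, h3, h4] at h1
        exact h1
      rw [rk, hspan, hmap]
      constructor
      · intro h; omega
      · intro h; omega
    rw [Nat.card_congr (Equiv.subtypeEquivRight hkey)]
    -- quotient dimension
    have hqd : Module.finrank Fq (F ⧸ W) = m - w := by
      have hfr := Submodule.finrank_quotient_add_finrank W
      rw [hW, hm] at hfr
      omega
    -- split off the `W` part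
    set pr := W.linearProjOfIsCompl W' hWc with hprdef
    set e := Submodule.quotientEquivOfIsCompl W W' hWc with hedef
    have fact1 : ∀ x : F ⧸ W, W.mkQ ((e x : W') : F) = x := by
      intro x
      rw [Submodule.mkQ_apply]
      exact Submodule.mk_quotientEquivOfIsCompl_apply hWc x
    have fact2 : ∀ x : F ⧸ W, pr ((e x : W') : F) = 0 :=
      fun x => Submodule.projectionOnto_apply_right hWc (e x)
    have fact3 : ∀ x : F, ((pr x : F) + ((e (W.mkQ x) : W') : F)) = x := by
      intro x
      have hc : W.mkQ ((e (W.mkQ x) : W') : F) = W.mkQ x := fact1 _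
      have hmem : x - ((e (W.mkQ x) : W') : F) ∈ W := by
        simp only [Submodule.mkQ_apply] at hc
        exact (Submodule.Quotient.eq W).mp hc.symm
      have hsplit : pr x = pr (x - ((e (W.mkQ x) : W') : F)) + pr ((e (W.mkQ x) : W') : F) := by
        rw [← map_add]; congr 1; abel
      have hleft : pr (x - ((e (W.mkQ x) : W') : F)) = ⟨x - ((e (W.mkQ x) : W') : F), hmem⟩ :=
        Submodule.projectionOnto_apply_left hWc ⟨_, hmem⟩
      rw [hsplit, fact2, add_zero, hleft]
      simp
    let E2 : {z : Fin u → F //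
        Module.finrank Fq (Submodule.span Fq (Set.range (W.mkQ ∘ z))) = s - w} ≃
        (Fin u → W) × {zb : Fin u → F ⧸ W //
          Module.finrank Fq (Submodule.span Fq (Set.range zb)) = s - w} :=
      { toFun := fun z => (fun i => pr (z.1 i), ⟨W.mkQ ∘ z.1, z.2⟩)
        invFun := fun p => ⟨fun i => (p.1 i : F) + ((e (p.2.1 i) : W') : F), by
          have hcomp : (W.mkQ ∘ fun i => (p.1 i : F) + ((e (p.2.1 i) : W') : F)) = p.2.1 := by
            funext i
            simp only [Function.comp_apply, map_add]
            rw [fact1]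
            have hz : W.mkQ (p.1 i : F) = 0 :=
              (Submodule.Quotient.mk_eq_zero W).mpr (p.1 i).2
            rw [hz, zero_add]
          rw [hcomp]
          exact p.2.2⟩
        left_inv := fun z => Subtype.ext (funext fun i => fact3 (z.1 i))
        right_inv := fun p => by
          refine Prod.ext (funext fun i => ?_) (Subtype.ext (funext fun i => ?_))
          · show pr ((p.1 i : F) + ((e (p.2.1 i) : W') : F)) = p.1 i
            rw [map_add, fact2, add_zero]
            exact Submodule.projectionOnto_apply_left hWc (p.1 i)
          · show W.mkQ ((p.1 i : F) + ((e (p.2.1 i) : W') : F)) = p.2.1 i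
            rw [map_add, fact1]
            have hz : W.mkQ (p.1 i : F) = 0 :=
              (Submodule.Quotient.mk_eq_zero W).mpr (p.1 i).2
            rw [hz, zero_add] }
    rw [Nat.card_congr E2, Nat.card_prod]
    have hcW : Nat.card (Fin u → W) = q ^ (w * u) := by
      haveI : Finite W := Subtype.finite
      rw [Nat.card_fun, Nat.card_eq_fintype_card (α := Fin u), Fintype.card_fin,
        card_submodule, hW, hq, ← pow_mul]
    have hcQ := count_rank (Fq := Fq) (V := F ⧸ W) u (s - w)
    rw [hqd, hq] at hcQ
    push_cast [hcW, hcQ]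
    ring
end
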